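/- Let G=(V,E) be a finite connected graph with positive vertex measure μ and positive symmetric edge weights w. Let f:ℝ→ℝ satisfy f(t)=a e^t+g(t)e^t with a>0 a constant, g uniformly bounded on ℝ, g(t)→0 as t→±∞, and f(t)>0 for all t. Let h:V→ℝ and c∈ℝ satisfy: (1) if c>0, there exists x₀∈V with h(x₀)>0; (2) if c=0, h changes sign on V and ∫_V h dμ<0; (3) if c<0, there exists x₀∈V with h(x₀)<0. Then there exists a constant C (depending on h, c, G, f) such that every solution u:V→ℝ of −Δu = h(x) f(u) − c satisfies max_{x∈V} |u(x)| ≤ C. -/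

import Mathlib

open Finset

/-- Recursive constant sequence used for the propagation estimates. -/
noncomputable def KWdseq (P Q R β : ℝ) : ℕ → ℝ
  | 0 => 0
  | k+1 => KWdseq P Q R β k + (P*β + Q * KWdseq P Q R β k)/R

lemma KWdseq_nonneg {P Q R β : ℝ} (hP : 0 ≤ P) (hQ : 0 ≤ Q) (hR : 0 < R) (hβ : 0 ≤ β) :
    ∀ k, 0 ≤ KWdseq P Q R β k := by
  intro k
  induction k with
  | zero => simp [KWdseq]
  | succ k ih =>
    have : 0 ≤ (P*β + Q * KWdseq P Q R β k)/R := by positivity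
    simp only [KWdseq]; linarith

lemma KWdseq_mono {P Q R β : ℝ} (hP : 0 ≤ P) (hQ : 0 ≤ Q) (hR : 0 < R) (hβ : 0 ≤ β) :
    Monotone (KWdseq P Q R β) := by
  apply monotone_nat_of_le_succ
  intro k
  have h1 := KWdseq_nonneg hP hQ hR hβ (β := β) k
  have : 0 ≤ (P*β + Q * KWdseq P Q R β k)/R := by positivity
  simp only [KWdseq]; linarith

lemma KWdseq_linear {P Q R : ℝ} (hR : R ≠ 0) (β : ℝ) :
    ∀ k, KWdseq P Q R β k = β * KWdseq P Q R 1 k := by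
  intro k
  induction k with
  | zero => simp [KWdseq]
  | succ k ih =>
    simp only [KWdseq, ih]
    field_simp

section KWProp
variable {V : Type*} [Fintype V] [DecidableEq V] (G : SimpleGraph V) [DecidableRel G.Adj]
variable (μ : V → ℝ) (w : V → V → ℝ)

/-- One-step descent: if `u` is close to its max at `y` and `Δu(y) ≥ -β`, then
`u` is still close to its max at any neighbor of `y`. -/
lemma KWstep (hμ : ∀ x, 0 < μ x) (hwpos : ∀ x y, G.Adj x y → 0 < w x y)
    (P Q R : ℝ) (hP : ∀ y, μ y ≤ P) (hR : 0 < R)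
    (hQ : ∀ y, ∑ z ∈ G.neighborFinset y, w y z ≤ Q)
    (hQ0 : 0 ≤ Q) (hRw : ∀ y z, G.Adj y z → R ≤ w y z)
    (u : V → ℝ) (s : ℝ) (hs : ∀ x, u x ≤ s)
    (β : ℝ) (hβ : 0 ≤ β)
    (y z : V) (hadj : G.Adj y z) (dd : ℝ) (hdd : 0 ≤ dd)
    (hy : s - dd ≤ u y)
    (hlap : -β ≤ (1 / μ y) * ∑ z' ∈ G.neighborFinset y, w y z' * (u z' - u y)) :
    s - (dd + (P*β + Q*dd)/R) ≤ u z := by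
  have hμy := hμ y
  have hzmem : z ∈ G.neighborFinset y := (SimpleGraph.mem_neighborFinset G y z).mpr hadj
  set S := ∑ z' ∈ G.neighborFinset y, w y z' * (u z' - u y) with hS
  -- S ≥ -β * μ y ≥ -β * P
  have hSlb : -(β * P) ≤ S := by
    have h1 : -β * μ y ≤ (1 / μ y) * S * μ y :=
      mul_le_mul_of_nonneg_right hlap (le_of_lt hμy)
    have h2 : (1 / μ y) * S * μ y = S := by field_simp
    have h3 : β * μ y ≤ β * P := mul_le_mul_of_nonneg_left (hP y) hβ
    nlinarith
  -- the sum over the other neighbors is ≤ Q * dd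
  have hrest : ∑ z' ∈ (G.neighborFinset y).erase z, w y z' * (u z' - u y) ≤ Q * dd := by
    calc ∑ z' ∈ (G.neighborFinset y).erase z, w y z' * (u z' - u y)
        ≤ ∑ z' ∈ (G.neighborFinset y).erase z, w y z' * dd := by
          apply Finset.sum_le_sum
          intro i hi
          have hi' : i ∈ G.neighborFinset y := Finset.mem_of_mem_erase hi
          have hwi : 0 < w y i := hwpos _ _ ((SimpleGraph.mem_neighborFinset G y i).mp hi')
          have : u i - u y ≤ dd := by have := hs i; linarith
          exact mul_le_mul_of_nonneg_left this (le_of_lt hwi)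
      _ ≤ ∑ z' ∈ G.neighborFinset y, w y z' * dd := by
          apply Finset.sum_le_sum_of_subset_of_nonneg (Finset.erase_subset _ _)
          intro i hi _
          have hwi : 0 < w y i := hwpos _ _ ((SimpleGraph.mem_neighborFinset G y i).mp hi)
          positivity
      _ = (∑ z' ∈ G.neighborFinset y, w y z') * dd := by rw [Finset.sum_mul]
      _ ≤ Q * dd := mul_le_mul_of_nonneg_right (hQ y) hdd
  have hsplit : S = w y z * (u z - u y) + ∑ z' ∈ (G.neighborFinset y).erase z, w y z' * (u z' - u y) := by
    rw [hS, ← Finset.add_sum_erase _ _ hzmem]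
  have hterm : -(β * P + Q * dd) ≤ w y z * (u z - u y) := by linarith
  have hwz : R ≤ w y z := hRw y z hadj
  have hwz0 : 0 < w y z := hwpos y z hadj
  have hA : 0 ≤ β * P + Q * dd := by
    have h3 : 0 ≤ β * P := mul_nonneg hβ (le_trans (le_of_lt hμy) (hP y))
    have h4 : 0 ≤ Q * dd := mul_nonneg hQ0 hdd
    linarith
  -- divide, using w y z ≥ R
  have hdiv : -((β * P + Q * dd)/R) ≤ u z - u y := by
    rcases le_or_gt 0 (u z - u y) with hpos | hneg
    · have : 0 ≤ (β * P + Q * dd)/R := div_nonneg hA (le_of_lt hR)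
      linarith
    · -- u z - u y < 0 : multiply out
      have key : (β * P + Q * dd)/R * R = β * P + Q * dd := by field_simp
      nlinarith [mul_le_mul_of_nonpos_left hwz (le_of_lt hneg),
        div_nonneg hA (le_of_lt hR)]
  have h2 : s - (dd + (P*β + Q*dd)/R) = s - dd - (β * P + Q * dd)/R := by ring
  linarith


/-- Propagation along a walk. -/
lemma KWwalk (hμ : ∀ x, 0 < μ x) (hwpos : ∀ x y, G.Adj x y → 0 < w x y)
    (P Q R : ℝ) (hP : ∀ y, μ y ≤ P) (hR : 0 < R)
    (hQ : ∀ y, ∑ z ∈ G.neighborFinset y, w y z ≤ Q)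
    (hQ0 : 0 ≤ Q) (hRw : ∀ y z, G.Adj y z → R ≤ w y z)
    (u : V → ℝ) (s : ℝ) (hs : ∀ x, u x ≤ s)
    (β : ℝ) (hβ : 0 ≤ β) (N : ℕ)
    (hcond : ∀ y, s - KWdseq P Q R β N ≤ u y →
        -β ≤ (1 / μ y) * ∑ z ∈ G.neighborFinset y, w y z * (u z - u y)) :
    ∀ (x z : V) (p : G.Walk x z) (j : ℕ), j + p.length ≤ N →
      s - KWdseq P Q R β j ≤ u x → s - KWdseq P Q R β (j + p.length) ≤ u z := by
  intro x z p
  have hP0 : 0 ≤ P := le_trans (le_of_lt (hμ x)) (hP x)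
  induction p with
  | nil =>
    intro j hj hx
    simpa using hx
  | @cons x x' z hadj q ih =>
    intro j hj hx
    have hjN : j ≤ N := by
      have := q.length; omega
    have hmono := KWdseq_mono hP0 hQ0 hR hβ (P := P) (Q := Q)
    have hxD : s - KWdseq P Q R β N ≤ u x :=
      le_trans (by have := hmono hjN; linarith) hx
    have hlap := hcond x hxD
    have hstep := KWstep G μ w hμ hwpos P Q R hP hR hQ hQ0 hRw u s hs β hβ
      x x' hadj (KWdseq P Q R β j) (KWdseq_nonneg hP0 hQ0 hR hβ j) hx hlap
    have hx' : s - KWdseq P Q R β (j+1) ≤ u x' := by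
      have : KWdseq P Q R β (j+1)
          = KWdseq P Q R β j + (P*β + Q * KWdseq P Q R β j)/R := rfl
      rw [this]; exact hstep
    have hlen : j + (SimpleGraph.Walk.cons hadj q).length = (j+1) + q.length := by
      simp [SimpleGraph.Walk.length_cons]; omega
    rw [hlen]
    exact ih (j+1) (by omega) hx'

/-- Global propagation from the maximum. -/
lemma KWglobal (hconn : G.Connected)
    (hμ : ∀ x, 0 < μ x) (hwpos : ∀ x y, G.Adj x y → 0 < w x y)
    (P Q R : ℝ) (hP : ∀ y, μ y ≤ P) (hR : 0 < R)
    (hQ : ∀ y, ∑ z ∈ G.neighborFinset y, w y z ≤ Q)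
    (hQ0 : 0 ≤ Q) (hRw : ∀ y z, G.Adj y z → R ≤ w y z)
    (u : V → ℝ) (s : ℝ) (hs : ∀ x, u x ≤ s)
    (β : ℝ) (hβ : 0 ≤ β) (N : ℕ) (hN : Fintype.card V ≤ N + 1)
    (hcond : ∀ y, s - KWdseq P Q R β N ≤ u y →
        -β ≤ (1 / μ y) * ∑ z ∈ G.neighborFinset y, w y z * (u z - u y))
    (xM : V) (hxM : u xM = s) :
    ∀ z, s - KWdseq P Q R β N ≤ u z := by
  have hP0 : 0 ≤ P := le_trans (le_of_lt (hμ xM)) (hP xM)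
  intro z
  obtain ⟨p⟩ := hconn.preconnected xM z
  have hlen : p.bypass.length ≤ N := by
    have := SimpleGraph.Walk.IsPath.length_lt (SimpleGraph.Walk.bypass_isPath p)
    omega
  have := KWwalk G μ w hμ hwpos P Q R hP hR hQ hQ0 hRw u s hs β hβ N hcond
    xM z p.bypass 0 (by omega) (by simp [KWdseq, hxM])
  have hmono := KWdseq_mono hP0 hQ0 hR hβ (P := P) (Q := Q)
  have h2 : KWdseq P Q R β (0 + p.bypass.length) ≤ KWdseq P Q R β N :=
    hmono (by omega)
  linarith

end KWProp

section KWIdent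
variable {V : Type*} [Fintype V] (G : SimpleGraph V) [DecidableRel G.Adj]
variable (μ : V → ℝ) (w : V → V → ℝ)

/-- Integration by parts: the integral of the Laplacian vanishes. -/
lemma KWsum_lap (hμ : ∀ x, 0 < μ x) (hwsymm : ∀ x y, w x y = w y x) (u : V → ℝ) :
    ∑ x, μ x * ((1 / μ x) * ∑ y ∈ G.neighborFinset x, w x y * (u y - u x)) = 0 := by
  have hcancel : ∀ x : V, μ x * ((1 / μ x) * ∑ y ∈ G.neighborFinset x, w x y * (u y - u x))
      = ∑ y ∈ G.neighborFinset x, w x y * (u y - u x) := by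
    intro x
    have := (hμ x).ne'
    field_simp
  rw [Finset.sum_congr rfl (fun x _ => hcancel x)]
  have hrw : ∀ x : V, ∑ y ∈ G.neighborFinset x, w x y * (u y - u x)
      = ∑ y, if G.Adj x y then w x y * (u y - u x) else 0 := by
    intro x
    rw [SimpleGraph.neighborFinset_eq_filter, Finset.sum_filter]
  rw [Finset.sum_congr rfl (fun x _ => hrw x)]
  set F : V → V → ℝ := fun x y => if G.Adj x y then w x y * (u y - u x) else 0 with hF
  have hanti : ∀ x y, F y x = -F x y := by
    intro x y
    by_cases hxy : G.Adj x y
    · simp only [hF, if_pos hxy, if_pos (G.adj_symm hxy), hwsymm x y]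
      ring
    · have : ¬ G.Adj y x := fun hc => hxy (G.adj_symm hc)
      simp [hF, hxy, this]
  have hswap : ∑ x, ∑ y, F x y = ∑ y, ∑ x, F x y := Finset.sum_comm
  have h2 : ∑ y, ∑ x, F x y = -∑ x, ∑ y, F x y := by
    calc ∑ y, ∑ x, F x y = ∑ x, ∑ y, F y x := rfl
      _ = ∑ x, ∑ y, -F x y := by
          exact Finset.sum_congr rfl fun x _ => Finset.sum_congr rfl fun y _ => hanti x y
      _ = -∑ x, ∑ y, F x y := by simp [Finset.sum_neg_distrib]
  linarith [hswap, h2]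

/-- The Laplacian of `-u`. -/
lemma KWlap_neg (u : V → ℝ) (y : V) :
    (1 / μ y) * ∑ z ∈ G.neighborFinset y, w y z * (-u z - -u y)
      = -((1 / μ y) * ∑ z ∈ G.neighborFinset y, w y z * (u z - u y)) := by
  have : ∀ z, w y z * (-u z - -u y) = -(w y z * (u z - u y)) := by
    intro z; ring
  rw [Finset.sum_congr rfl (fun z _ => this z), Finset.sum_neg_distrib]
  ring

/-- Crude bound for the Laplacian in terms of the oscillation. -/
lemma KWlap_abs (hμ : ∀ x, 0 < μ x) (hwpos : ∀ x y, G.Adj x y → 0 < w x y)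
    (Q μ0 : ℝ) (hQ : ∀ y, ∑ z ∈ G.neighborFinset y, w y z ≤ Q)
    (hμ0 : 0 < μ0) (hμ0le : ∀ x, μ0 ≤ μ x)
    (u : V → ℝ) (s m : ℝ) (hs : ∀ x, u x ≤ s) (hm : ∀ x, m ≤ u x) (y : V) :
    |(1 / μ y) * ∑ z ∈ G.neighborFinset y, w y z * (u z - u y)| ≤ (Q / μ0) * (s - m) := by
  have hμy := hμ y
  have hsm : 0 ≤ s - m := by have := hs y; have := hm y; linarith
  have hsum : |∑ z ∈ G.neighborFinset y, w y z * (u z - u y)| ≤ Q * (s - m) := by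
    calc |∑ z ∈ G.neighborFinset y, w y z * (u z - u y)|
        ≤ ∑ z ∈ G.neighborFinset y, |w y z * (u z - u y)| := Finset.abs_sum_le_sum_abs _ _
      _ ≤ ∑ z ∈ G.neighborFinset y, w y z * (s - m) := by
          apply Finset.sum_le_sum
          intro i hi
          have hwi : 0 < w y i := hwpos _ _ ((SimpleGraph.mem_neighborFinset G y i).mp hi)
          rw [abs_mul, abs_of_pos hwi]
          apply mul_le_mul_of_nonneg_left _ (le_of_lt hwi)
          rw [abs_le]
          constructor
          · have := hm i; have := hs y; linarith
          · have := hs i; have := hm y; linarith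
      _ = (∑ z ∈ G.neighborFinset y, w y z) * (s - m) := by rw [Finset.sum_mul]
      _ ≤ Q * (s - m) := mul_le_mul_of_nonneg_right (hQ y) hsm
  rw [abs_mul]
  have h1 : |1 / μ y| = 1 / μ y := abs_of_pos (by positivity)
  rw [h1]
  have h2 : 1 / μ y ≤ 1 / μ0 := one_div_le_one_div_of_le hμ0 (hμ0le y)
  calc (1 / μ y) * |∑ z ∈ G.neighborFinset y, w y z * (u z - u y)|
      ≤ (1 / μ0) * (Q * (s - m)) := by
        apply mul_le_mul h2 hsum (abs_nonneg _) (by positivity)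
    _ = (Q / μ0) * (s - m) := by ring

end KWIdent

set_option maxHeartbeats 4000000 in
/-- Uniform a priori bound for solutions of the Kazdan-Warner type
equation `-Δu = h f(u) - c` on a finite connected graph, where
`f(t) = a e^t + g(t) e^t` with `a > 0`, `g` bounded, `g(t) → 0` as `t → ±∞`,
and `f > 0`. -/
theorem stmt0 {V : Type*} [Fintype V] [Nonempty V]
    (G : SimpleGraph V) [DecidableRel G.Adj] (hconn : G.Connected)
    (μ : V → ℝ) (hμ : ∀ x, 0 < μ x)
    (w : V → V → ℝ) (hwsymm : ∀ x y, w x y = w y x)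
    (hwpos : ∀ x y, G.Adj x y → 0 < w x y)
    (f g : ℝ → ℝ) (a : ℝ) (ha : 0 < a)
    (hf : ∀ t, f t = a * Real.exp t + g t * Real.exp t)
    (hgbdd : ∃ M : ℝ, ∀ t, |g t| ≤ M)
    (hgtop : Filter.Tendsto g Filter.atTop (nhds 0))
    (hgbot : Filter.Tendsto g Filter.atBot (nhds 0))
    (hfpos : ∀ t, 0 < f t)
    (h : V → ℝ) (c : ℝ)
    (hcpos : 0 < c → ∃ x₀, 0 < h x₀)
    (hczero : c = 0 → (∃ x, 0 < h x) ∧ (∃ x, h x < 0) ∧ ∑ x, μ x * h x < 0)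
    (hcneg : c < 0 → ∃ x₀, h x₀ < 0) :
    ∃ C : ℝ, ∀ u : V → ℝ,
      (∀ x, -((1 / μ x) * ∑ y ∈ G.neighborFinset x, w x y * (u y - u x))
          = h x * f (u x) - c) →
      ∀ x, |u x| ≤ C := by
  classical
  obtain ⟨M, hM⟩ := hgbdd
  have hM0 : 0 ≤ M := le_trans (abs_nonneg _) (hM 0)
  have haM : 0 < a + M := by linarith
  have hfub : ∀ t, f t ≤ (a + M) * Real.exp t := by
    intro t; rw [hf t]
    have h1 : g t ≤ M := le_trans (le_abs_self _) (hM t)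
    nlinarith [Real.exp_pos t]
  obtain ⟨T, hT⟩ : ∃ T : ℝ, ∀ t, T ≤ t → |g t| ≤ a / 2 := by
    have hev : ∀ᶠ t in Filter.atTop, |g t| ≤ a / 2 := by
      have := hgtop.eventually (Metric.closedBall_mem_nhds (0:ℝ) (by positivity : (0:ℝ) < a/2))
      filter_upwards [this] with t ht
      simpa [Real.dist_eq] using ht
    obtain ⟨T, hT⟩ := Filter.eventually_atTop.mp hev
    exact ⟨T, hT⟩
  have hflb : ∀ t, T ≤ t → (a / 2) * Real.exp t ≤ f t := by
    intro t ht; rw [hf t]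
    have h1 := abs_le.mp (hT t ht)
    nlinarith [Real.exp_pos t]
  by_cases hcard : Fintype.card V ≤ 1
  · -- Singleton graph
    have hsub : ∀ x y : V, x = y := fun x y => Fintype.card_le_one_iff.mp hcard x y
    have xs : V := Classical.arbitrary V
    have hnb : ∀ (x : V) (u : V → ℝ),
        (∑ y ∈ G.neighborFinset x, w x y * (u y - u x)) = 0 := by
      intro x u
      apply Finset.sum_eq_zero
      intro y hy
      exact absurd (hsub x y) (G.ne_of_adj ((SimpleGraph.mem_neighborFinset G x y).mp hy))
    have heqn : ∀ (u : V → ℝ),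
        (∀ x, -((1 / μ x) * ∑ y ∈ G.neighborFinset x, w x y * (u y - u x))
          = h x * f (u x) - c) → h xs * f (u xs) = c := by
      intro u hu
      have h2 := hu xs
      rw [hnb xs u] at h2
      simp at h2
      linarith
    rcases eq_or_ne c 0 with hc | hc
    · obtain ⟨⟨x₀, hx₀⟩, ⟨x₁, hx₁⟩, _⟩ := hczero hc
      refine ⟨0, fun u hu x => ?_⟩
      exfalso
      rw [hsub x₀ x₁] at hx₀
      linarith
    · set q := |c| / |h xs| with hq
      refine ⟨max (max T (Real.log (2 * q / a))) (-(Real.log (q / (a + M)))), fun u hu x => ?_⟩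
      have heq := heqn u hu
      have hfu := hfpos (u xs)
      have hhne : h xs ≠ 0 := by
        intro h0; rw [h0] at heq; simp at heq; exact hc heq.symm
      have habs : |h xs| * f (u xs) = |c| := by
        rw [← abs_of_pos hfu, ← abs_mul, heq]
      have hqpos : 0 < q := div_pos (abs_pos.mpr hc) (abs_pos.mpr hhne)
      have hfeq : f (u xs) = q := by
        rw [hq]
        field_simp
        nlinarith [abs_pos.mpr hhne]
      have hxeq : x = xs := hsub x xs
      rw [hxeq, abs_le]
      constructor
      · have h1 : q ≤ (a + M) * Real.exp (u xs) := hfeq ▸ hfub (u xs)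
        have h2 : Real.log (q / (a + M)) ≤ u xs := by
          rw [Real.log_le_iff_le_exp (div_pos hqpos haM), div_le_iff₀ haM]
          nlinarith
        have h3 : -(max (max T (Real.log (2 * q / a))) (-(Real.log (q / (a + M)))))
            ≤ Real.log (q / (a + M)) := by
          have := le_max_right (max T (Real.log (2 * q / a))) (-(Real.log (q / (a + M))))
          linarith
        linarith
      · rcases le_or_gt (u xs) T with hc2 | hc2
        · exact le_trans hc2 (le_trans (le_max_left _ _) (le_max_left _ _))
        · have h1 : (a / 2) * Real.exp (u xs) ≤ q := hfeq ▸ hflb (u xs) (le_of_lt hc2)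
          have h2 : u xs ≤ Real.log (2 * q / a) := by
            rw [Real.le_log_iff_exp_le (by positivity)]
            rw [le_div_iff₀ ha]
            nlinarith
          exact le_trans h2 (le_trans (le_max_right _ _) (le_max_left _ _))
  · -- Main case: at least two vertices
    push_neg at hcard
    have hVne : (Finset.univ : Finset V).Nonempty := Finset.univ_nonempty
    obtain ⟨x00⟩ := (inferInstance : Nonempty V)
    obtain ⟨Pc, hPcdef⟩ : ∃ t, t = Finset.univ.sup' hVne μ := ⟨_, rfl⟩
    have hPc : ∀ y : V, μ y ≤ Pc := fun y => hPcdef ▸ Finset.le_sup' μ (Finset.mem_univ y)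
    have hPc0 : 0 < Pc := lt_of_lt_of_le (hμ x00) (hPc x00)
    obtain ⟨μ0, hμ0def⟩ : ∃ t, t = Finset.univ.inf' hVne μ := ⟨_, rfl⟩
    have hμ0le : ∀ y : V, μ0 ≤ μ y := fun y => hμ0def ▸ Finset.inf'_le μ (Finset.mem_univ y)
    have hμ00 : 0 < μ0 := by
      obtain ⟨i, _, hi⟩ := Finset.exists_mem_eq_inf' hVne μ
      rw [hμ0def, hi]; exact hμ i
    have : Nontrivial V := Fintype.one_lt_card_iff_nontrivial.mp hcard
    obtain ⟨v1, v2, hv12⟩ := exists_pair_ne V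
    obtain ⟨p0⟩ := hconn.preconnected v1 v2
    obtain ⟨e1, e2, hadj⟩ : ∃ x y : V, G.Adj x y := by
      cases p0 with
      | nil => exact absurd rfl hv12
      | cons hadj q => exact ⟨_, _, hadj⟩
    set EF := Finset.univ.filter (fun p : V × V => G.Adj p.1 p.2) with hEFdef
    have hEFne : EF.Nonempty := ⟨(e1, e2), by simp [hEFdef, hadj]⟩
    obtain ⟨R, hRdef⟩ : ∃ t, t = EF.inf' hEFne (fun p => w p.1 p.2) := ⟨_, rfl⟩
    have hR0 : 0 < R := by
      obtain ⟨i, hi, h2⟩ := Finset.exists_mem_eq_inf' hEFne (fun p => w p.1 p.2)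
      rw [hRdef, h2]
      exact hwpos _ _ (by simpa [hEFdef] using hi)
    have hRw : ∀ y z, G.Adj y z → R ≤ w y z := fun y z hyz =>
      hRdef ▸ Finset.inf'_le (fun p : V × V => w p.1 p.2)
        (show ((y, z) : V × V) ∈ EF by simp [hEFdef, hyz])
    obtain ⟨Q, hQdef⟩ : ∃ t, t = Finset.univ.sup' hVne (fun y => ∑ z ∈ G.neighborFinset y, w y z) := ⟨_, rfl⟩
    have hQ : ∀ y, (∑ z ∈ G.neighborFinset y, w y z) ≤ Q := fun y =>
      hQdef ▸ Finset.le_sup' (fun y => ∑ z ∈ G.neighborFinset y, w y z) (Finset.mem_univ y)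
    have hQ0 : 0 ≤ Q := le_trans (Finset.sum_nonneg fun z hz =>
      le_of_lt (hwpos _ _ ((SimpleGraph.mem_neighborFinset G x00 z).mp hz))) (hQ x00)
    obtain ⟨H, hHdef⟩ : ∃ t, t = Finset.univ.sup' hVne (fun x => |h x|) := ⟨_, rfl⟩
    have hH : ∀ x, |h x| ≤ H := fun x => hHdef ▸ Finset.le_sup' (fun x => |h x|) (Finset.mem_univ x)
    obtain ⟨NN, hNNdef⟩ : ∃ t, t = Fintype.card V := ⟨_, rfl⟩
    have hNh : Fintype.card V ≤ NN + 1 := by rw [hNNdef]; omega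
    -- shared upper bound
    have upper : ∀ (m₀ : ℝ) (x₀ : V), h x₀ ≠ 0 → ∃ S : ℝ, ∀ u : V → ℝ,
        (∀ x, -((1 / μ x) * ∑ y ∈ G.neighborFinset x, w x y * (u y - u x))
          = h x * f (u x) - c) →
        (∀ x, m₀ ≤ u x) → ∀ x, u x ≤ S := by
      intro m₀ x₀ hx₀
      set HF := Finset.univ.filter (fun x => h x ≠ 0) with hHFdef
      have hHFne : HF.Nonempty := ⟨x₀, by simp [hHFdef, hx₀]⟩
      obtain ⟨h₀, hh₀def⟩ : ∃ t, t = HF.inf' hHFne (fun x => |h x|) := ⟨_, rfl⟩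
      have hh₀pos : 0 < h₀ := by
        obtain ⟨i, hi, h2⟩ := Finset.exists_mem_eq_inf' hHFne (fun x => |h x|)
        rw [hh₀def, h2]
        exact abs_pos.mpr (by simpa [hHFdef] using hi)
      have hh₀le : ∀ y, h y ≠ 0 → h₀ ≤ |h y| := fun y hy =>
        hh₀def ▸ Finset.inf'_le (fun x => |h x|) (show y ∈ HF by simp [hHFdef, hy])
      obtain ⟨D, hDdef⟩ : ∃ t, t = KWdseq Pc Q R |c| NN := ⟨_, rfl⟩
      have hD0 : 0 ≤ D := hDdef ▸ KWdseq_nonneg (le_of_lt hPc0) hQ0 hR0 (abs_nonneg c) NN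
      obtain ⟨α, hαdef⟩ : ∃ t, t = (Q / μ0) / h₀ := ⟨_, rfl⟩
      have hα0 : 0 ≤ α := by rw [hαdef]; positivity
      obtain ⟨γ, hγdef⟩ : ∃ t, t = ((Q / μ0) * |m₀| + |c|) / h₀ := ⟨_, rfl⟩
      have hγ0 : 0 ≤ γ := by rw [hγdef]; positivity
      obtain ⟨x₁, hx₁def⟩ : ∃ t, t = max 1 ((8 / a) * (α + α * D + |γ| + 1)) := ⟨_, rfl⟩
      refine ⟨D + max T x₁, ?_⟩
      intro u hu hm
      by_contra hcon
      push_neg at hcon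
      obtain ⟨xb, hxb⟩ := hcon
      obtain ⟨xM, _, hxMmax⟩ := Finset.exists_max_image Finset.univ u hVne
      set s := u xM with hsdef
      have hs : ∀ x, u x ≤ s := fun x => hxMmax x (Finset.mem_univ x)
      have hsS : D + max T x₁ < s := lt_of_lt_of_le hxb (hs xb)
      have key : ∀ y, h y ≠ 0 → ¬ (s - D ≤ u y) := by
        intro y hy hge
        have hTle : T ≤ u y := by
          have h1 : T ≤ max T x₁ := le_max_left _ _
          linarith
        have hflow : (a / 2) * Real.exp (s - D) ≤ f (u y) := by
          have h1 : Real.exp (s - D) ≤ Real.exp (u y) := Real.exp_le_exp.mpr hge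
          have h2 := hflb (u y) hTle
          nlinarith
        -- upper bound for f (u y)
        have hlapabs := KWlap_abs G μ w hμ hwpos Q μ0 hQ hμ00 hμ0le u s m₀ hs hm y
        have heqy := hu y
        have hLy : (1 / μ y) * ∑ z ∈ G.neighborFinset y, w y z * (u z - u y)
            = c - h y * f (u y) := by linarith
        have habs : |h y| * f (u y) ≤ |c| + (Q / μ0) * (s - m₀) := by
          have h1 : |h y * f (u y)| ≤ |c| + (Q / μ0) * (s - m₀) := by
            have h2 : h y * f (u y) = c - (c - h y * f (u y)) := by ring
            rw [h2]
            calc |c - (c - h y * f (u y))| ≤ |c| + |c - h y * f (u y)| := abs_sub _ _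
              _ ≤ |c| + (Q / μ0) * (s - m₀) := by rw [← hLy]; linarith
          rw [abs_mul, abs_of_pos (hfpos (u y))] at h1
          exact h1
        have hfup : f (u y) ≤ α * s + γ := by
          have h1 : h₀ * f (u y) ≤ |c| + (Q / μ0) * (s - m₀) :=
            le_trans (mul_le_mul_of_nonneg_right (hh₀le y hy) (le_of_lt (hfpos (u y)))) habs
          have h2 : (Q / μ0) * (s - m₀) ≤ (Q / μ0) * s + (Q / μ0) * |m₀| := by
            have h3 : -m₀ ≤ |m₀| := neg_le_abs m₀
            have h4 : 0 ≤ Q / μ0 := by positivity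
            nlinarith
          rw [hαdef, hγdef]
          rw [div_mul_eq_mul_div, ← add_div, le_div_iff₀ hh₀pos]
          nlinarith
        -- numeric contradiction
        obtain ⟨x, hxdef⟩ : ∃ t, t = s - D := ⟨_, rfl⟩
        have hx1 : 1 ≤ x := by
          have h1 : x₁ ≤ max T x₁ := le_max_right _ _
          have h2 : (1:ℝ) ≤ x₁ := by rw [hx₁def]; exact le_max_left _ _
          rw [hxdef]; linarith
        have hx8 : (8 / a) * (α + α * D + |γ| + 1) ≤ x := by
          have h1 : (8 / a) * (α + α * D + |γ| + 1) ≤ x₁ := by rw [hx₁def]; exact le_max_right _ _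
          have h2 : x₁ ≤ max T x₁ := le_max_right _ _
          rw [hxdef]; linarith
        have hxpos : (0:ℝ) < x := lt_of_lt_of_le one_pos hx1
        have hexp2 : Real.exp x = Real.exp (x/2) * Real.exp (x/2) := by
          rw [← Real.exp_add]; ring_nf
        have he : x^2/4 ≤ Real.exp x := by
          have h1 := Real.add_one_le_exp (x/2)
          nlinarith [Real.exp_pos (x/2)]
        have hstep1 : α + α * D + |γ| + 1 ≤ (a/8) * x := by
          have h1 : (a/8) * ((8/a) * (α + α * D + |γ| + 1)) = α + α * D + |γ| + 1 := by
            field_simp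
          nlinarith [mul_le_mul_of_nonneg_left hx8 (by linarith : (0:ℝ) ≤ a/8)]
        have hstep2 : (α + α * D + |γ| + 1) * x ≤ (a/8) * x * x :=
          mul_le_mul_of_nonneg_right hstep1 (le_of_lt hxpos)
        have hstep3 : α * x + α * D + |γ| + 1 ≤ (α + α * D + |γ| + 1) * x := by
          nlinarith [mul_nonneg (add_nonneg (add_nonneg (mul_nonneg hα0 hD0) (abs_nonneg γ))
            zero_le_one) (sub_nonneg.mpr hx1)]
        have hstep4 : α * s + γ < (a/8) * x * x := by
          have h1 : γ ≤ |γ| := le_abs_self γ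
          have h2 : s = x + D := by rw [hxdef]; ring
          nlinarith
        have hstep5 : (a/8) * x * x ≤ (a/2) * Real.exp x := by nlinarith
        rw [← hxdef] at hflow
        linarith
      have hcond : ∀ y, s - KWdseq Pc Q R |c| NN ≤ u y →
          -|c| ≤ (1 / μ y) * ∑ z ∈ G.neighborFinset y, w y z * (u z - u y) := by
        intro y hge
        rw [← hDdef] at hge
        by_cases hy : h y = 0
        · have heqy := hu y
          rw [hy] at heqy
          have hL : (1 / μ y) * ∑ z ∈ G.neighborFinset y, w y z * (u z - u y) = c := by
            linarith [heqy]
          rw [hL]; exact neg_abs_le c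
        · exact absurd hge (key y hy)
      have hglob := KWglobal G μ w hconn hμ hwpos Pc Q R hPc hR0 hQ hQ0 hRw u s hs
        |c| (abs_nonneg c) NN hNh hcond xM rfl
      have := hglob x₀
      rw [← hDdef] at this
      exact key x₀ hx₀ this
    rcases lt_trichotomy c 0 with hc | hc | hc
    · -- c < 0
      obtain ⟨x₀, hx₀⟩ := hcneg hc
      have hH0 : 0 < H := lt_of_lt_of_le (abs_pos.mpr (ne_of_lt hx₀)) (hH x₀)
      obtain ⟨Mlo, hMlodef⟩ : ∃ t, t = Real.log (|c| / (H * (a + M))) := ⟨_, rfl⟩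
      have mlow : ∀ u : V → ℝ,
          (∀ x, -((1 / μ x) * ∑ y ∈ G.neighborFinset x, w x y * (u y - u x))
            = h x * f (u x) - c) → ∀ x, Mlo ≤ u x := by
        intro u hu x
        obtain ⟨xm, _, hxmmin⟩ := Finset.exists_min_image Finset.univ u hVne
        have hm : ∀ z, u xm ≤ u z := fun z => hxmmin z (Finset.mem_univ z)
        have hlapm : 0 ≤ (1 / μ xm) * ∑ z ∈ G.neighborFinset xm, w xm z * (u z - u xm) := by
          apply mul_nonneg (one_div_nonneg.mpr (le_of_lt (hμ xm)))
          apply Finset.sum_nonneg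
          intro i hi
          have hwi : 0 < w xm i := hwpos _ _ ((SimpleGraph.mem_neighborFinset G xm i).mp hi)
          have := hm i
          nlinarith
        have heq := hu xm
        have h1 : h xm * f (u xm) ≤ c := by linarith
        have hfm := hfpos (u xm)
        have hhm : h xm < 0 := by nlinarith
        have h2 : |c| ≤ |h xm| * f (u xm) := by
          rw [abs_of_neg hc, abs_of_neg hhm]; nlinarith
        have h3 : |h xm| * f (u xm) ≤ H * ((a + M) * Real.exp (u xm)) :=
          mul_le_mul (hH xm) (hfub (u xm)) (le_of_lt hfm) (le_trans (abs_nonneg _) (hH xm))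
        have h4 : |c| / (H * (a + M)) ≤ Real.exp (u xm) := by
          rw [div_le_iff₀ (by positivity)]; nlinarith
        have h5 : Mlo ≤ u xm := by
          rw [hMlodef, Real.log_le_iff_le_exp
            (div_pos (abs_pos.mpr (ne_of_lt hc)) (by positivity))]
          exact h4
        exact le_trans h5 (hm x)
      obtain ⟨S, hS⟩ := upper Mlo x₀ (ne_of_lt hx₀)
      refine ⟨|S| + |Mlo|, fun u hu x => ?_⟩
      have h1 := mlow u hu x
      have h2 := hS u hu (mlow u hu) x
      rw [abs_le]
      constructor
      · have h3 := neg_abs_le Mlo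
        have h4 := abs_nonneg S
        linarith
      · have h3 := le_abs_self S
        have h4 := abs_nonneg Mlo
        linarith
    · -- c = 0
      obtain ⟨⟨x₀, hx₀⟩, ⟨x₁, hx₁⟩, hA⟩ := hczero hc
      have hH0 : 0 < H := lt_of_lt_of_le (abs_pos.mpr (ne_of_gt hx₀)) (hH x₀)
      -- splitting of sums according to the sign of h
      have hsplit : ∀ F : V → ℝ, (∀ x, h x = 0 → F x = 0) →
          ∑ x, F x = (∑ x ∈ Finset.univ.filter (fun x => 0 < h x), F x)
            + ∑ x ∈ Finset.univ.filter (fun x => h x < 0), F x := by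
        intro F hF
        rw [← Finset.sum_filter_add_sum_filter_not Finset.univ (fun x => 0 < h x) F]
        congr 1
        have e3 : (Finset.univ.filter (fun x => ¬ 0 < h x)).filter (fun x => h x < 0)
            = Finset.univ.filter (fun x => h x < 0) := by
          ext i
          simp only [Finset.mem_filter, Finset.mem_univ, true_and]
          constructor
          · rintro ⟨_, h2⟩; exact h2
          · intro h2; exact ⟨by linarith, h2⟩
        have e4 : ∑ x ∈ (Finset.univ.filter (fun x => ¬ 0 < h x)).filter
            (fun x => ¬ h x < 0), F x = 0 := by
          apply Finset.sum_eq_zero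
          intro i hi
          simp only [Finset.mem_filter, Finset.mem_univ, true_and, not_lt] at hi
          exact hF i (le_antisymm hi.1 hi.2)
        calc ∑ x ∈ Finset.univ.filter (fun x => ¬ 0 < h x), F x
            = (∑ x ∈ ((Finset.univ.filter (fun x => ¬ 0 < h x)).filter (fun x => h x < 0)), F x)
              + ∑ x ∈ ((Finset.univ.filter (fun x => ¬ 0 < h x)).filter (fun x => ¬ h x < 0)), F x :=
              (Finset.sum_filter_add_sum_filter_not _ _ _).symm
          _ = ∑ x ∈ Finset.univ.filter (fun x => h x < 0), F x := by rw [e3, e4, add_zero]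
      obtain ⟨Pp, hPpdef⟩ : ∃ t, t = ∑ x ∈ Finset.univ.filter (fun x => 0 < h x), μ x * h x :=
        ⟨_, rfl⟩
      obtain ⟨Nn2, hNndef⟩ : ∃ t, t = ∑ x ∈ Finset.univ.filter (fun x => h x < 0), μ x * h x :=
        ⟨_, rfl⟩
      have hPp : 0 < Pp := by
        rw [hPpdef]
        exact Finset.sum_pos (fun i hi => mul_pos (hμ i) (Finset.mem_filter.mp hi).2)
          ⟨x₀, Finset.mem_filter.mpr ⟨Finset.mem_univ _, hx₀⟩⟩
      have hNn2 : Nn2 < 0 := by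
        have h1 : 0 < ∑ x ∈ Finset.univ.filter (fun x => h x < 0), μ x * (-(h x)) :=
          Finset.sum_pos (fun i hi => mul_pos (hμ i)
            (by simp only [Finset.mem_filter] at hi; linarith [hi.2]))
            ⟨x₁, Finset.mem_filter.mpr ⟨Finset.mem_univ _, hx₁⟩⟩
        have h2 : ∑ x ∈ Finset.univ.filter (fun x => h x < 0), μ x * (-(h x)) = -Nn2 := by
          rw [hNndef, ← Finset.sum_neg_distrib]
          exact Finset.sum_congr rfl fun i _ => by ring
        linarith
      have hAsum : Pp + Nn2 < 0 := by
        have h1 := hsplit (fun x => μ x * h x) (fun x hx => by simp [hx])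
        rw [← hPpdef, ← hNndef] at h1
        linarith [hA, h1.symm.le, h1.le]
      -- the constant δ
      obtain ⟨δ, hδdef⟩ : ∃ t, t = a * (-(Pp + Nn2)) / (2 * (Pp - Nn2)) := ⟨_, rfl⟩
      have hδpos : 0 < δ := by
        rw [hδdef]
        exact div_pos (mul_pos ha (by linarith : (0:ℝ) < -(Pp + Nn2))) (by linarith)
      have hδeq : δ * (2 * (Pp - Nn2)) = a * (-(Pp + Nn2)) := by
        rw [hδdef, div_mul_cancel₀]
        exact ne_of_gt (by linarith)
      have hden : (0:ℝ) < 2 * (Pp - Nn2) := by linarith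
      have hδa : δ < a := by
        have h1 : a * (-(Pp + Nn2)) < a * (2 * (Pp - Nn2)) := by
          apply mul_lt_mul_of_pos_left _ ha
          linarith
        have h2 : δ * (2 * (Pp - Nn2)) < a * (2 * (Pp - Nn2)) := by linarith only [hδeq, h1]
        exact lt_of_mul_lt_mul_right (by linarith only [h2]) (le_of_lt hden)
      have hkey : (a + δ) * Pp < (a - δ) * (-Nn2) := by
        have h1 : 0 < δ * (Pp - Nn2) := mul_pos hδpos (by linarith)
        linarith only [hδeq, h1]
      -- the constants κ, ρ, β, D'
      obtain ⟨κ, hκdef⟩ : ∃ t, t = KWdseq Pc Q R 1 NN := ⟨_, rfl⟩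
      have hκpos : 0 < κ := by
        rw [hκdef]
        have h1 : KWdseq Pc Q R 1 1 ≤ KWdseq Pc Q R 1 NN :=
          KWdseq_mono (le_of_lt hPc0) hQ0 hR0 zero_le_one (by rw [hNNdef]; omega)
        have h2 : KWdseq Pc Q R 1 1 = 0 + (Pc * 1 + Q * 0) / R := rfl
        have h3 : 0 + (Pc * 1 + Q * 0) / R = Pc / R := by ring
        have h4 : 0 < Pc / R := div_pos hPc0 hR0
        linarith [h2 ▸ (h3 ▸ h4), h1]
      obtain ⟨ρ, hρdef⟩ : ∃ t, t = ((a - δ) * (-Nn2)) / ((a + δ) * Pp) := ⟨_, rfl⟩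
      have hρ1 : 1 < ρ := by
        rw [hρdef]
        exact (one_lt_div (mul_pos (by linarith) hPp)).mpr hkey
      obtain ⟨β, hβdef⟩ : ∃ t, t = Real.log ρ / (2 * κ) := ⟨_, rfl⟩
      have hβpos : 0 < β := by
        rw [hβdef]
        exact div_pos (Real.log_pos hρ1) (by linarith)
      obtain ⟨D', hD'def⟩ : ∃ t, t = KWdseq Pc Q R β NN := ⟨_, rfl⟩
      have hD'0 : 0 ≤ D' := hD'def ▸ KWdseq_nonneg (le_of_lt hPc0) hQ0 hR0 (le_of_lt hβpos) NN
      have hD'eq : D' = Real.log ρ / 2 := by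
        rw [hD'def, KWdseq_linear (ne_of_gt hR0) β NN, ← hκdef, hβdef]
        field_simp
      -- threshold below which g is δ-small
      obtain ⟨τδ, hτδ⟩ : ∃ τδ : ℝ, ∀ t, t ≤ τδ → |g t| ≤ δ := by
        have hev : ∀ᶠ t in Filter.atBot, |g t| ≤ δ := by
          have := hgbot.eventually (Metric.closedBall_mem_nhds (0:ℝ) hδpos)
          filter_upwards [this] with t ht
          simpa [Real.dist_eq] using ht
        obtain ⟨τδ, hτδ⟩ := Filter.eventually_atBot.mp hev
        exact ⟨τδ, hτδ⟩
      obtain ⟨τ2, hτ2def⟩ : ∃ t, t = Real.log (β / (H * (a + M))) := ⟨_, rfl⟩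
      obtain ⟨Mlo, hMlodef⟩ : ∃ t, t = min τδ τ2 - D' := ⟨_, rfl⟩
      have mlow : ∀ u : V → ℝ,
          (∀ x, -((1 / μ x) * ∑ y ∈ G.neighborFinset x, w x y * (u y - u x))
            = h x * f (u x) - c) → ∀ x, Mlo ≤ u x := by
        intro u hu x
        obtain ⟨xm, _, hxmmin⟩ := Finset.exists_min_image Finset.univ u hVne
        have hm : ∀ z, u xm ≤ u z := fun z => hxmmin z (Finset.mem_univ z)
        suffices hxm : Mlo ≤ u xm by exact le_trans hxm (hm x)
        by_contra hcon
        push_neg at hcon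
        rw [hMlodef] at hcon
        -- propagate upward from the minimum
        have hcond : ∀ y, -u xm - KWdseq Pc Q R β NN ≤ -u y →
            -β ≤ (1 / μ y) * ∑ z ∈ G.neighborFinset y, w y z * (-u z - -u y) := by
          intro y hge
          rw [← hD'def] at hge
          rw [KWlap_neg G μ w u y]
          apply neg_le_neg
          have huy : u y ≤ u xm + D' := by linarith
          have huyτ : u y < τ2 := by
            have := min_le_right τδ τ2
            linarith
          have heqy := hu y
          have h1 : (1 / μ y) * ∑ z ∈ G.neighborFinset y, w y z * (u z - u y)
              = c - h y * f (u y) := by linarith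
          have h2 : -(h y * f (u y)) ≤ |h y| * f (u y) := by
            linarith only [mul_le_mul_of_nonneg_right (neg_abs_le (h y))
              (le_of_lt (hfpos (u y)))]
          have h3 : |h y| * f (u y) ≤ H * ((a + M) * Real.exp (u y)) :=
            mul_le_mul (hH y) (hfub (u y)) (le_of_lt (hfpos (u y)))
              (le_trans (abs_nonneg _) (hH y))
          have h4 : Real.exp (u y) ≤ Real.exp τ2 := Real.exp_le_exp.mpr (le_of_lt huyτ)
          have h5 : Real.exp τ2 = β / (H * (a + M)) := by
            rw [hτ2def]; exact Real.exp_log (div_pos hβpos (by positivity))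
          have h6 : H * ((a + M) * Real.exp (u y)) ≤ β := by
            rw [← mul_assoc]
            calc H * (a + M) * Real.exp (u y) ≤ H * (a + M) * Real.exp τ2 :=
                mul_le_mul_of_nonneg_left h4 (le_of_lt (mul_pos hH0 haM))
              _ = β := by rw [h5]; field_simp
          rw [h1, hc]
          linarith only [h2, h3, h6]
        have hglob := KWglobal G μ w hconn hμ hwpos Pc Q R hPc hR0 hQ hQ0 hRw
          (fun z => -u z) (-u xm) (fun z => neg_le_neg (hm z)) β (le_of_lt hβpos)
          NN hNh hcond xm rfl
        have hall : ∀ z, u z ≤ u xm + D' := by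
          intro z
          have h9 : -u xm - D' ≤ -u z := by
            have h8 := hglob z
            rw [← hD'def] at h8
            exact h8
          linarith
        have hallτδ : ∀ z, u z ≤ τδ := by
          intro z
          have := min_le_left τδ τ2
          linarith [hall z]
        -- the integral identity
        have hKW := KWsum_lap G μ w hμ hwsymm u
        have hzero : ∑ x, μ x * (h x * f (u x)) = 0 := by
          have h1 : ∀ x : V, μ x * (h x * f (u x))
              = -(μ x * ((1 / μ x) * ∑ y ∈ G.neighborFinset x, w x y * (u y - u x))) := by
            intro x
            have h3 : h x * f (u x)
                = -((1 / μ x) * ∑ y ∈ G.neighborFinset x, w x y * (u y - u x)) := by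
              linarith [hu x, hc]
            rw [h3]; ring
          rw [Finset.sum_congr rfl (fun x _ => h1 x), Finset.sum_neg_distrib, hKW, neg_zero]
        -- the two bounds
        have hBp : ∑ x ∈ Finset.univ.filter (fun x => 0 < h x), μ x * (h x * f (u x))
            ≤ (a + δ) * Real.exp (u xm + D') * Pp := by
          rw [hPpdef, Finset.mul_sum]
          apply Finset.sum_le_sum
          intro i hi
          have hipos : 0 < h i := (Finset.mem_filter.mp hi).2
          have hgi := abs_le.mp (hτδ (u i) (hallτδ i))
          have hfi : f (u i) ≤ (a + δ) * Real.exp (u xm + D') := by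
            rw [hf (u i)]
            have h1 : a + g (u i) ≤ a + δ := by linarith [hgi.2]
            have h2 : Real.exp (u i) ≤ Real.exp (u xm + D') := Real.exp_le_exp.mpr (hall i)
            calc a * Real.exp (u i) + g (u i) * Real.exp (u i)
                = (a + g (u i)) * Real.exp (u i) := by ring
              _ ≤ (a + δ) * Real.exp (u xm + D') :=
                mul_le_mul h1 h2 (le_of_lt (Real.exp_pos _)) (by linarith)
          have h7 : 0 ≤ μ i * h i := le_of_lt (mul_pos (hμ i) hipos)
          have h8 := mul_le_mul_of_nonneg_left hfi h7
          linarith only [h8]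
        have hBn : ∑ x ∈ Finset.univ.filter (fun x => h x < 0), μ x * (h x * f (u x))
            ≤ (a - δ) * Real.exp (u xm) * Nn2 := by
          rw [hNndef, Finset.mul_sum]
          apply Finset.sum_le_sum
          intro i hi
          have hineg : h i < 0 := (Finset.mem_filter.mp hi).2
          have hgi := abs_le.mp (hτδ (u i) (hallτδ i))
          have hfi : (a - δ) * Real.exp (u xm) ≤ f (u i) := by
            rw [hf (u i)]
            have h1 : a - δ ≤ a + g (u i) := by linarith [hgi.1]
            have h2 : Real.exp (u xm) ≤ Real.exp (u i) := Real.exp_le_exp.mpr (hm i)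
            calc (a - δ) * Real.exp (u xm) ≤ (a + g (u i)) * Real.exp (u i) :=
                mul_le_mul h1 h2 (le_of_lt (Real.exp_pos _)) (by linarith)
              _ = a * Real.exp (u i) + g (u i) * Real.exp (u i) := by ring
          have h7 : μ i * h i ≤ 0 := le_of_lt (mul_neg_of_pos_of_neg (hμ i) hineg)
          have h8 := mul_le_mul_of_nonpos_left hfi h7
          linarith only [h8]
        -- contradiction
        have hsum := hsplit (fun x => μ x * (h x * f (u x)))
          (fun x hx => by simp [hx])
        have hfin : (a + δ) * Real.exp (u xm + D') * Pp
            < (a - δ) * Real.exp (u xm) * (-Nn2) := by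
          have hltρ : Real.exp D' < ρ := by
            rw [hD'eq]
            calc Real.exp (Real.log ρ / 2) < Real.exp (Real.log ρ) :=
                Real.exp_lt_exp.mpr (by linarith [Real.log_pos hρ1])
              _ = ρ := Real.exp_log (by linarith)
          have hρeq : ρ * ((a + δ) * Pp) = (a - δ) * (-Nn2) := by
            rw [hρdef]
            field_simp
          have h1 : (a + δ) * Pp * Real.exp D' < (a + δ) * Pp * ρ :=
            mul_lt_mul_of_pos_left hltρ (mul_pos (by linarith) hPp)
          have h1' : (a + δ) * Pp * Real.exp D' < (a - δ) * (-Nn2) := by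
            rw [show (a + δ) * Pp * ρ = ρ * ((a + δ) * Pp) from by ring, hρeq] at h1
            exact h1
          have h2 := mul_lt_mul_of_pos_left h1' (Real.exp_pos (u xm))
          rw [Real.exp_add]
          linarith only [h2]
        linarith only [hzero, hsum, hBp, hBn, hfin]
      obtain ⟨S, hS⟩ := upper Mlo x₀ (ne_of_gt hx₀)
      refine ⟨|S| + |Mlo|, fun u hu x => ?_⟩
      have h1 := mlow u hu x
      have h2 := hS u hu (mlow u hu) x
      rw [abs_le]
      constructor
      · have h3 := neg_abs_le Mlo
        have h4 := abs_nonneg S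
        linarith
      · have h3 := le_abs_self S
        have h4 := abs_nonneg Mlo
        linarith
    · -- 0 < c
      obtain ⟨x₀, hx₀⟩ := hcpos hc
      have hH0 : 0 < H := lt_of_lt_of_le (abs_pos.mpr (ne_of_gt hx₀)) (hH x₀)
      obtain ⟨τ, hτdef⟩ : ∃ t, t = Real.log (1 / (H * (a + M))) := ⟨_, rfl⟩
      obtain ⟨s₀, hs₀def⟩ : ∃ t, t = Real.log (c / (H * (a + M))) := ⟨_, rfl⟩
      obtain ⟨D', hD'def⟩ : ∃ t, t = KWdseq Pc Q R (c+1) NN := ⟨_, rfl⟩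
      have hD'0 : 0 ≤ D' :=
        hD'def ▸ KWdseq_nonneg (le_of_lt hPc0) hQ0 hR0 (by linarith) NN
      obtain ⟨Mlo, hMlodef⟩ : ∃ t, t = min (τ - D') (s₀ - D') := ⟨_, rfl⟩
      have mlow : ∀ u : V → ℝ,
          (∀ x, -((1 / μ x) * ∑ y ∈ G.neighborFinset x, w x y * (u y - u x))
            = h x * f (u x) - c) → ∀ x, Mlo ≤ u x := by
        intro u hu x
        obtain ⟨xm, _, hxmmin⟩ := Finset.exists_min_image Finset.univ u hVne
        have hm : ∀ z, u xm ≤ u z := fun z => hxmmin z (Finset.mem_univ z)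
        rcases le_or_gt (τ - D') (u xm) with hcase | hcase
        · refine le_trans ?_ (le_trans hcase (hm x))
          rw [hMlodef]; exact min_le_left _ _
        · -- propagate upward from the minimum
          have hcond : ∀ y, -u xm - KWdseq Pc Q R (c+1) NN ≤ -u y →
              -(c+1) ≤ (1 / μ y) * ∑ z ∈ G.neighborFinset y, w y z * (-u z - -u y) := by
            intro y hge
            rw [← hD'def] at hge
            rw [KWlap_neg G μ w u y]
            apply neg_le_neg
            have huy : u y ≤ u xm + D' := by linarith
            have huyτ : u y < τ := by linarith
            have heqy := hu y
            have h1 : (1 / μ y) * ∑ z ∈ G.neighborFinset y, w y z * (u z - u y)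
                = c - h y * f (u y) := by linarith
            have h2 : -(h y * f (u y)) ≤ |h y| * f (u y) := by
              have := neg_abs_le (h y)
              nlinarith [hfpos (u y)]
            have h3 : |h y| * f (u y) ≤ H * ((a + M) * Real.exp (u y)) :=
              mul_le_mul (hH y) (hfub (u y)) (le_of_lt (hfpos (u y)))
                (le_trans (abs_nonneg _) (hH y))
            have h4 : Real.exp (u y) ≤ Real.exp τ := Real.exp_le_exp.mpr (le_of_lt huyτ)
            have h5 : Real.exp τ = 1 / (H * (a + M)) := by
              rw [hτdef]; exact Real.exp_log (by positivity)
            have h6 : H * ((a + M) * Real.exp (u y)) ≤ 1 := by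
              rw [← mul_assoc]
              calc H * (a + M) * Real.exp (u y) ≤ H * (a + M) * Real.exp τ :=
                mul_le_mul_of_nonneg_left h4 (le_of_lt (mul_pos hH0 haM))
                _ = 1 := by rw [h5]; field_simp
            rw [h1]
            nlinarith
          have hglob := KWglobal G μ w hconn hμ hwpos Pc Q R hPc hR0 hQ hQ0 hRw
            (fun z => -u z) (-u xm) (fun z => neg_le_neg (hm z)) (c+1) (by linarith)
            NN hNh hcond xm rfl
          obtain ⟨xM, _, hxMmax⟩ := Finset.exists_max_image Finset.univ u hVne
          have hs : ∀ z, u z ≤ u xM := fun z => hxMmax z (Finset.mem_univ z)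
          have hup : u xM ≤ u xm + D' := by
            have h9 : -u xm - D' ≤ -u xM := by
              have h8 := hglob xM
              rw [← hD'def] at h8
              exact h8
            linarith
          -- max point estimate
          have hlapM : (1 / μ xM) * ∑ z ∈ G.neighborFinset xM, w xM z * (u z - u xM) ≤ 0 := by
            apply mul_nonpos_of_nonneg_of_nonpos (one_div_nonneg.mpr (le_of_lt (hμ xM)))
            apply Finset.sum_nonpos
            intro i hi
            have hwi : 0 < w xM i := hwpos _ _ ((SimpleGraph.mem_neighborFinset G xM i).mp hi)
            have := hs i
            nlinarith
          have heqM := hu xM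
          have h1 : c ≤ h xM * f (u xM) := by linarith
          have h2 : h xM * f (u xM) ≤ H * ((a + M) * Real.exp (u xM)) := by
            have h3 : h xM * f (u xM) ≤ |h xM| * f (u xM) := by
              nlinarith [le_abs_self (h xM), hfpos (u xM)]
            exact le_trans h3 (mul_le_mul (hH xM) (hfub (u xM)) (le_of_lt (hfpos (u xM)))
              (le_trans (abs_nonneg _) (hH xM)))
          have h4 : c / (H * (a + M)) ≤ Real.exp (u xM) := by
            rw [div_le_iff₀ (by positivity)]; nlinarith
          have h5 : s₀ ≤ u xM := by
            rw [hs₀def, Real.log_le_iff_le_exp (div_pos hc (by positivity))]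
            exact h4
          have h6 : Mlo ≤ u xm := by
            have h7 : Mlo ≤ s₀ - D' := by rw [hMlodef]; exact min_le_right _ _
            linarith
          exact le_trans h6 (hm x)
      obtain ⟨S, hS⟩ := upper Mlo x₀ (ne_of_gt hx₀)
      refine ⟨|S| + |Mlo|, fun u hu x => ?_⟩
      have h1 := mlow u hu x
      have h2 := hS u hu (mlow u hu) x
      rw [abs_le]
      constructor
      · have h3 := neg_abs_le Mlo
        have h4 := abs_nonneg S
        linarith
      · have h3 := le_abs_self S
        have h4 := abs_nonneg Mlo
        linarith
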